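/- Let M be a von Neumann algebra acting on a Hilbert space H with cyclic separating vector Ω, let N ⊆ M be a von Neumann subalgebra with Ω cyclic and separating for N, let J_N, J_M be the respective modular conjugations, and define γ = Ad(J_N J_M). If w' is an isometry in N' satisfying J_M w' J_N = w', then w = J_N w' J_N lies in N, is an isometry (w* w = 1), w w* = J_N w' w'* J_N, and w satisfies the intertwining relation w n = γ(n) w for all n ∈ N. -/

import Mathlib

/-- Let `M` be a von Neumann algebra on a Hilbert space `H` with a
cyclic separating vector `Ω`, `N ⊆ M` a von Neumann subalgebra with `Ω` also
cyclic and separating for `N`, and `JN`, `JM` the modular conjugations of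
`(N, Ω)` and `(M, Ω)` (given here as antiunitary involutions, with the Tomita
property that `Ad JN` maps the commutant `N'` onto `N`).  Let
`γ = Ad (JN JM)` be Longo's canonical endomorphism.  If `w'` is an isometry in
the commutant `N'` satisfying `JM w' JN = w'`, then `w = JN w' JN` lies in `N`,
is an isometry (`w* w = 1`), satisfies `w w* = JN w' w'* JN`, and intertwines:
`w n = γ(n) w` for all `n ∈ N`. -/
theorem longo_intertwiner
    {H : Type*} [NormedAddCommGroup H] [InnerProductSpace ℂ H] [CompleteSpace H]
    (M N : VonNeumannAlgebra H) (hNM : ∀ x, x ∈ N → x ∈ M)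
    (Ω : H)
    (hcycM : Dense {ξ : H | ∃ x ∈ M, x Ω = ξ})
    (hsepM : ∀ x ∈ M, x Ω = 0 → x = 0)
    (hcycN : Dense {ξ : H | ∃ n ∈ N, n Ω = ξ})
    (hsepN : ∀ n ∈ N, n Ω = 0 → n = 0)
    (JN JM : H → H)
    (hJNconj : ∀ (c : ℂ) (x y : H), JN (c • x + y) = (starRingEnd ℂ c) • JN x + JN y)
    (hJMconj : ∀ (c : ℂ) (x y : H), JM (c • x + y) = (starRingEnd ℂ c) • JM x + JM y)
    (hJNinvol : Function.Involutive JN) (hJMinvol : Function.Involutive JM)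
    (hJNanti : ∀ x y : H, (inner ℂ (JN x) (JN y) : ℂ) = inner ℂ y x)
    (hJManti : ∀ x y : H, (inner ℂ (JM x) (JM y) : ℂ) = inner ℂ y x)
    (hTomitaN : ∀ x y : H →L[ℂ] H, (∀ n ∈ N, x * n = n * x) →
      (∀ ξ : H, y ξ = JN (x (JN ξ))) → y ∈ N)
    (γ : (H →L[ℂ] H) → (H →L[ℂ] H))
    (hγ : ∀ (x : H →L[ℂ] H) (ξ : H), γ x ξ = JN (JM (x (JM (JN ξ)))))
    (w' : H →L[ℂ] H)
    (hw'comm : ∀ n ∈ N, w' * n = n * w')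
    (hw'iso : star w' * w' = 1)
    (hJrel : ∀ ξ : H, JM (w' (JN ξ)) = w' ξ)
    (w : H →L[ℂ] H) (hwdef : ∀ ξ : H, w ξ = JN (w' (JN ξ))) :
    w ∈ N ∧ star w * w = 1 ∧
    (∀ ξ : H, (w * star w) ξ = JN ((w' * star w') (JN ξ))) ∧
    (∀ n ∈ N, w * n = γ n * w) := by

  have hstarw : ∀ ξ : H, (star w) ξ = JN ((star w') (JN ξ)) := by
    intro ξ
    apply ext_inner_right ℂ
    intro η
    rw [ContinuousLinearMap.star_eq_adjoint, ContinuousLinearMap.adjoint_inner_left]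
    calc (inner ℂ ξ (w η) : ℂ) = inner ℂ ξ (JN (w' (JN η))) := by rw [hwdef]
      _ = inner ℂ (JN (JN ξ)) (JN (w' (JN η))) := by rw [hJNinvol ξ]
      _ = inner ℂ (w' (JN η)) (JN ξ) := by rw [hJNanti]
      _ = inner ℂ (JN η) ((ContinuousLinearMap.adjoint w') (JN ξ)) := by
            rw [ContinuousLinearMap.adjoint_inner_right]
      _ = inner ℂ (JN η) ((star w') (JN ξ)) := by rw [ContinuousLinearMap.star_eq_adjoint]
      _ = inner ℂ (JN η) (JN (JN ((star w') (JN ξ)))) := by rw [hJNinvol]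
      _ = inner ℂ (JN ((star w') (JN ξ))) η := by rw [hJNanti]
  have hmem : w ∈ N := hTomitaN w' w hw'comm hwdef
  have hiso : star w * w = 1 := by
    ext ξ
    have h1 : (star w' * w') (JN ξ) = (1 : H →L[ℂ] H) (JN ξ) := by rw [hw'iso]
    simp only [ContinuousLinearMap.mul_apply, ContinuousLinearMap.one_apply] at h1 ⊢
    rw [hwdef, hstarw, hJNinvol, h1, hJNinvol]
  refine ⟨hmem, hiso, ?_, ?_⟩
  · intro ξ
    simp only [ContinuousLinearMap.mul_apply]
    rw [hstarw, hwdef, hJNinvol]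
  · intro n hn
    ext ξ
    have hc : w' (n ξ) = n (w' ξ) :=
      congrArg (fun f : H →L[ℂ] H => f ξ) (hw'comm n hn)
    have h2 : JM (w' (n ξ)) = w' (JN (n ξ)) := by
      have := hJrel (JN (n ξ))
      rwa [hJNinvol] at this
    simp only [ContinuousLinearMap.mul_apply]
    rw [hwdef, hγ, hwdef, hJNinvol, hJrel, ← hc, h2]
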